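/- Define h : (finite subsets of ℕ) → ℕ ∪ {∞} recursively by h(∅) = 0 and, for L ≠ ∅, h(L) = 1 + max over M ∈ S(L) of min{h(L ∩ M), h(L ∩ (M-1))}, where S(L) = {M ⊆ ℕ finite : M ≠ L, 0 < |M| ≤ |L|}. Then h is monotone: if L' ⊆ L then h(L') ≤ h(L). -/

import Mathlib

open Finset

/-- `M - 1 = {m-1 : m ∈ M, m ≥ 1}`. -/
def shiftDown (M : Finset ℕ) : Finset ℕ := (M.filter (1 ≤ ·)).image (· - 1)

/-- `h` satisfies the recursion defining the height function of Mubayi–Rödl: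
`h(∅) = 0` and, for `L ≠ ∅`,
`h(L) = 1 + max_{M ∈ S(L)} min {h(L ∩ M), h(L ∩ (M-1))}` where
`S(L) = {M ⊆ ℕ finite : M ≠ L, 0 < |M| ≤ |L|}`. -/
def IsHeightRec (h : Finset ℕ → ℕ) : Prop :=
  h ∅ = 0 ∧ ∀ L : Finset ℕ, L ≠ ∅ →
    h L = 1 + sSup {k : ℕ | ∃ M : Finset ℕ, M ≠ L ∧ 0 < M.card ∧ M.card ≤ L.card ∧
      k = min (h (L ∩ M)) (h (L ∩ shiftDown M))}

lemma bddAboveAux (h : Finset ℕ → ℕ) (L : Finset ℕ) :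
    BddAbove {k : ℕ | ∃ M : Finset ℕ, M ≠ L ∧ 0 < M.card ∧ M.card ≤ L.card ∧
      k = min (h (L ∩ M)) (h (L ∩ shiftDown M))} := by
  refine ⟨L.powerset.sup h, ?_⟩
  rintro k ⟨M, _, _, _, rfl⟩
  exact le_trans (min_le_left _ _)
    (Finset.le_sup (Finset.mem_powerset.mpr inter_subset_left))

/-- The height function is monotone (property (A2)). -/
theorem stmt_9 (h : Finset ℕ → ℕ) (hh : IsHeightRec h) (L L' : Finset ℕ)
    (hsub : L' ⊆ L) : h L' ≤ h L := by
  obtain ⟨h0, hrec⟩ := hh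
  induction L using Finset.strongInduction generalizing L' with
  | _ L IH =>
    rcases eq_or_ne L' L with rfl | hne
    · exact le_rfl
    rcases eq_or_ne L' ∅ with rfl | hne'
    · simp [h0]
    have hLne : L ≠ ∅ := by
      rintro rfl; exact hne' (Finset.subset_empty.mp hsub)
    have hcard : L'.card < L.card :=
      Finset.card_lt_card (Finset.ssubset_iff_subset_ne.mpr ⟨hsub, hne⟩)
    rw [hrec L' hne', hrec L hLne]
    apply Nat.add_le_add_left
    -- nonemptiness of the L' set
    obtain ⟨x, hx⟩ := Finset.nonempty_iff_ne_empty.mpr hne'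
    have hne'' : ({x + 1} : Finset ℕ) ≠ L' := by
      intro e
      have : x ∈ ({x + 1} : Finset ℕ) := e ▸ hx
      simp at this
    apply csSup_le
    · exact ⟨min (h (L' ∩ {x + 1})) (h (L' ∩ shiftDown {x + 1})),
        ⟨{x + 1}, hne'', by simp, by
          simpa using Finset.card_pos.mpr ⟨x, hx⟩, rfl⟩⟩
    rintro k ⟨M, hM1, hM2, hM3, rfl⟩
    have hML : M.card < L.card := lt_of_le_of_lt hM3 hcard
    have hinterM : L ∩ M ⊂ L := by
      apply Finset.ssubset_iff_subset_ne.mpr ⟨inter_subset_left, ?_⟩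
      intro e
      have := Finset.card_le_card (e ▸ inter_subset_right : L ⊆ M)
      omega
    have hsd : (shiftDown M).card ≤ M.card :=
      le_trans Finset.card_image_le (Finset.card_filter_le _ _)
    have hinterS : L ∩ shiftDown M ⊂ L := by
      apply Finset.ssubset_iff_subset_ne.mpr ⟨inter_subset_left, ?_⟩
      intro e
      have := Finset.card_le_card (e ▸ inter_subset_right : L ⊆ shiftDown M)
      omega
    have k1 : h (L' ∩ M) ≤ h (L ∩ M) :=
      IH _ hinterM _ (Finset.inter_subset_inter_right hsub)
    have k2 : h (L' ∩ shiftDown M) ≤ h (L ∩ shiftDown M) :=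
      IH _ hinterS _ (Finset.inter_subset_inter_right hsub)
    have hMneL : M ≠ L := by
      intro e; rw [e] at hML; omega
    calc min (h (L' ∩ M)) (h (L' ∩ shiftDown M))
        ≤ min (h (L ∩ M)) (h (L ∩ shiftDown M)) := min_le_min k1 k2
      _ ≤ _ := le_csSup (bddAboveAux h L) ⟨M, hMneL, hM2, le_of_lt hML, rfl⟩
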